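/- Suppose n = Mk for a positive integer M, and let I_r = {1, M+1, 2M+1, ..., (k−1)M+1} select every M-th row of the generator matrix G of an (n,k) BCH-DFT code, yielding square submatrix G_k. Then det(G_k G_k^H) = (2^{k(k−1)}/k^k) · ∏_{r=1}^{k−1} (sin²(πr/k))^{k−r} = 1, and consequently all eigenvalues of G_k G_k^H equal 1. -/

import Mathlib

open Matrix Finset Complex Real

/-- The unitary `l × l` DFT matrix, with entries `(1/√l)·exp(-2πi·r·s/l)`. -/
noncomputable def dftMatrix (l : ℕ) : Matrix (Fin l) (Fin l) ℂ :=
  fun r s => (1 / Real.sqrt l : ℝ) * Complex.exp (-(2 * Real.pi * Complex.I * r.val * s.val) / l)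

/-- The `n × k` selection matrix with an `α × α` identity block at the top-left and a
`β × β` identity block at the bottom-right (`α + β = k`), zeros elsewhere. -/
def sigmaMat (n k α : ℕ) : Matrix (Fin n) (Fin k) ℂ :=
  fun r s => if (s.val < α ∧ r.val = s.val) ∨ (α ≤ s.val ∧ r.val = s.val + (n - k)) then 1 else 0

/-- The generator matrix `G = √(n/k) · Wₙᴴ Σ W_k` of an `(n,k)` BCH-DFT code. -/
noncomputable def genMatrix (n k α : ℕ) : Matrix (Fin n) (Fin k) ℂ :=
  (Real.sqrt ((n : ℝ) / k) : ℂ) • ((dftMatrix n)ᴴ * sigmaMat n k α * dftMatrix k)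

lemma orth_sum {k : ℕ} (hk : 0 < k) (i j : Fin k) :
    ∑ c : Fin k, Complex.exp (2 * π * Complex.I * c.val * i.val / k) *
      Complex.exp (-(2 * π * Complex.I * c.val * j.val) / k)
    = if i = j then (k : ℂ) else 0 := by
  have hkC : (k : ℂ) ≠ 0 := Nat.cast_ne_zero.mpr hk.ne'
  set d : ℤ := (i.val : ℤ) - j.val with hd
  set ζ : ℂ := Complex.exp (2 * π * Complex.I * d / k) with hz
  have hterm : ∀ c : Fin k,
      Complex.exp (2 * π * Complex.I * c.val * i.val / k) *
        Complex.exp (-(2 * π * Complex.I * c.val * j.val) / k) = ζ ^ c.val := by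
    intro c
    rw [hz, ← Complex.exp_nat_mul, ← Complex.exp_add]
    congr 1
    push_cast [hd]
    field_simp
    ring
  rw [Finset.sum_congr rfl (fun c _ => hterm c), Fin.sum_univ_eq_sum_range]
  have hzk : ζ ^ k = 1 := by
    rw [hz, ← Complex.exp_nat_mul]
    rw [show (k : ℂ) * (2 * π * Complex.I * d / k) = d * (2 * π * Complex.I) by
      field_simp]
    exact Complex.exp_int_mul_two_pi_mul_I d
  by_cases hij : i = j
  · subst hij
    simp [hz, hd]
  · rw [if_neg hij]
    have hdne : d ≠ 0 := by
      simp only [hd, sub_ne_zero]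
      exact_mod_cast fun h => hij (Fin.ext h)
    have hz1 : ζ ≠ 1 := by
      intro h
      rw [hz, Complex.exp_eq_one_iff] at h
      obtain ⟨m, hm⟩ := h
      have h2pi : (2 : ℂ) * π * Complex.I ≠ 0 := by
        simp [Real.pi_ne_zero, Complex.I_ne_zero, Complex.ofReal_ne_zero]
      field_simp at hm
      have h2 : ((m * k : ℤ) : ℂ) = (d : ℂ) := by
        push_cast
        apply mul_left_cancel₀ h2pi
        rw [hm]; ring
      have h3 : d = m * k := by exact_mod_cast h2.symm
      have hm0 : m ≠ 0 := by rintro rfl; simp at h3; exact hdne h3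
      have h5 : (k : ℤ) ≤ |d| := by
        rw [h3, abs_mul, abs_of_nonneg (by positivity : (0:ℤ) ≤ (k:ℤ))]
        nlinarith [Int.one_le_abs hm0, (by positivity : (0:ℤ) < (k:ℤ))]
      have h4 : |d| < k := by
        have hi := i.isLt; have hj := j.isLt
        rw [abs_lt]; constructor <;> omega
      linarith
    rw [geom_sum_eq hz1, hzk, sub_self, zero_div]

lemma submatrix_eq_one {n k M α : ℕ} (hk : 0 < k) (hM : 0 < M) (hn : n = M * k)
    (hkn : k < n) (f : Fin k → Fin n) (hfdef : ∀ i, (f i).val = i.val * M) :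
    (genMatrix n k α).submatrix f id = 1 := by
  have hnpos : 0 < n := hk.trans hkn
  have hkC : (k : ℂ) ≠ 0 := Nat.cast_ne_zero.mpr hk.ne'
  have hnC : (n : ℂ) ≠ 0 := Nat.cast_ne_zero.mpr hnpos.ne'
  have hMC : (M : ℂ) ≠ 0 := Nat.cast_ne_zero.mpr hM.ne'
  -- the selected row index inside `Fin n` for column `c` of Σ
  have hg : ∀ c : Fin k, (if c.val < α then c.val else c.val + (n - k)) < n := by
    intro c; have := c.isLt; split <;> omega
  set g : Fin k → Fin n := fun c => ⟨if c.val < α then c.val else c.val + (n - k), hg c⟩ with hgdef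
  have hsig : ∀ (s : Fin n) (c : Fin k), sigmaMat n k α s c = if s = g c then 1 else 0 := by
    intro s c
    have hcond : ((c.val < α ∧ s.val = c.val) ∨ (α ≤ c.val ∧ s.val = c.val + (n - k)))
        ↔ s = g c := by
      rw [Fin.ext_iff]
      simp only [hgdef]
      split <;> omega
    simp only [sigmaMat, hcond]
  -- entry of Aᴴ Σ
  have hAS : ∀ (r : Fin n) (c : Fin k), ((dftMatrix n)ᴴ * sigmaMat n k α) r c
      = (starRingEnd ℂ) (dftMatrix n (g c) r) := by
    intro r c
    rw [Matrix.mul_apply]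
    rw [Finset.sum_congr rfl (fun s _ => by rw [hsig s c, conjTranspose_apply])]
    simp [Finset.sum_ite_eq']
  -- conjugate of a dft entry
  have hconj : ∀ (l : ℕ) (s r : Fin l), (starRingEnd ℂ) (dftMatrix l s r)
      = ((1 / Real.sqrt l : ℝ) : ℂ) * Complex.exp (2 * π * Complex.I * s.val * r.val / l) := by
    intro l s r
    simp only [dftMatrix]
    rw [_root_.map_mul, Complex.conj_ofReal, ← Complex.exp_conj]
    congr 1
    simp [map_div₀, map_neg, Complex.conj_I, map_ofNat]
    try ring
  -- exponent reduction for the selected rows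
  have hexp : ∀ (c i : Fin k),
      Complex.exp (2 * π * Complex.I * (g c).val * (f i).val / n)
        = Complex.exp (2 * π * Complex.I * c.val * i.val / k) := by
    intro c i
    rw [hfdef i]
    by_cases hc : c.val < α
    · have : (g c).val = c.val := by simp [hgdef, hc]
      rw [this]
      congr 1
      have : ((i.val * M : ℕ) : ℂ) = (i.val : ℂ) * M := by push_cast; ring
      rw [this, hn]
      push_cast
      field_simp
      try ring
    · have h1 : (g c).val = c.val + (n - k) := by simp [hgdef, hc]
      have h2 : n - k = (M - 1) * k := by rw [hn, Nat.sub_mul, one_mul]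
      rw [h1, h2]
      have key : (2 * π * Complex.I * ((c.val + (M - 1) * k : ℕ) : ℂ) * ((i.val * M : ℕ) : ℂ) / n)
          = 2 * π * Complex.I * c.val * i.val / k + (((M - 1) * i.val : ℤ) : ℂ) * (2 * π * Complex.I) := by
        have hM1 : ((M - 1 : ℕ) : ℂ) = (M : ℂ) - 1 := by
          push_cast [Nat.cast_sub hM]
          ring
        rw [hn]
        push_cast [hM1]
        field_simp
        try ring
      rw [key, Complex.exp_add, Complex.exp_int_mul_two_pi_mul_I, mul_one]
  -- now compute the entry
  ext i j
  rw [Matrix.submatrix_apply, id_eq, genMatrix, Matrix.smul_apply, Matrix.mul_apply]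
  rw [Finset.sum_congr rfl (fun c _ => by
    rw [hAS (f i) c, hconj n (g c) (f i), dftMatrix])]
  simp only [smul_eq_mul]
  have hsum :
      ∑ c : Fin k, ((1 / Real.sqrt n : ℝ) : ℂ) * Complex.exp (2 * π * Complex.I * (g c).val * (f i).val / n)
        * (((1 / Real.sqrt k : ℝ) : ℂ) * Complex.exp (-(2 * π * Complex.I * c.val * j.val) / k))
      = ((1 / Real.sqrt n : ℝ) : ℂ) * ((1 / Real.sqrt k : ℝ) : ℂ) *
        (if i = j then (k : ℂ) else 0) := by
    rw [← orth_sum hk i j, Finset.mul_sum]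
    refine Finset.sum_congr rfl fun c _ => ?_
    rw [hexp c i]
    ring
  rw [hsum, Matrix.one_apply]
  by_cases hij : i = j
  · rw [if_pos hij, if_pos hij]
    have hreal : Real.sqrt ((n : ℝ) / k) * (1 / Real.sqrt n * (1 / Real.sqrt k) * k) = 1 := by
      have hsn : Real.sqrt n ≠ 0 := by positivity
      have hsk : Real.sqrt k ≠ 0 := by positivity
      have h1 : Real.sqrt ((n:ℝ)/k) = Real.sqrt n / Real.sqrt k := Real.sqrt_div (by positivity) _
      have h2 : Real.sqrt k * Real.sqrt k = k := Real.mul_self_sqrt (by positivity)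
      rw [h1]
      field_simp
      linear_combination (-1 : ℝ) * h2
    calc (Real.sqrt ((n : ℝ) / k) : ℂ) * (((1 / Real.sqrt n : ℝ) : ℂ) * ((1 / Real.sqrt k : ℝ) : ℂ) * (k : ℂ))
        = ((Real.sqrt ((n : ℝ) / k) * (1 / Real.sqrt n * (1 / Real.sqrt k) * k) : ℝ) : ℂ) := by
          push_cast; ring
      _ = 1 := by rw [hreal]; norm_num
  · rw [if_neg hij, if_neg hij, mul_zero, mul_zero]

lemma abs_one_sub_exp (θ : ℝ) (h0 : 0 ≤ θ/2) (hπ : θ/2 ≤ π) :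
    ‖1 - Complex.exp (θ * Complex.I)‖ = 2 * Real.sin (θ/2) := by
  have hcos : Real.cos θ = 1 - 2 * Real.sin (θ/2)^2 := by
    have h1 := Real.sin_sq_eq_half_sub (θ/2)
    rw [show 2 * (θ/2) = θ by ring] at h1
    linarith
  have hexp : Complex.exp (θ * Complex.I)
      = Complex.ofReal (Real.cos θ) + Complex.ofReal (Real.sin θ) * Complex.I := by
    rw [Complex.exp_mul_I, Complex.ofReal_cos, Complex.ofReal_sin]
  have hs : 0 ≤ Real.sin (θ/2) := Real.sin_nonneg_of_nonneg_of_le_pi h0 hπ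
  rw [hexp, show (1 : ℂ) - (Complex.ofReal (Real.cos θ) + Complex.ofReal (Real.sin θ) * Complex.I)
      = Complex.ofReal (1 - Real.cos θ) + Complex.ofReal (-Real.sin θ) * Complex.I by
    push_cast; ring]
  rw [Complex.norm_add_mul_I]
  rw [show (1 - Real.cos θ)^2 + (-Real.sin θ)^2 = (2 * Real.sin (θ/2))^2 by
    nlinarith [Real.sin_sq_add_cos_sq θ]]
  exact Real.sqrt_sq (by positivity)

set_option maxHeartbeats 1000000 in

set_option maxHeartbeats 1000000 in
lemma prod_sin_eq {k : ℕ} (hk : 0 < k) :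
    ∏ r ∈ Finset.Ico 1 k, Real.sin (π * r / k) = k / 2 ^ (k - 1) := by
  obtain ⟨m, rfl⟩ : ∃ m, k = m + 1 := ⟨k - 1, by omega⟩
  have hprim : IsPrimitiveRoot (Complex.exp (2 * π * Complex.I / ((m + 1 : ℕ) : ℂ))) (m + 1) :=
    Complex.isPrimitiveRoot_exp (m + 1) (by omega)
  have hmain := hprim.prod_one_sub_pow_eq_order
  have habs : ∀ r ∈ Finset.range m,
      ‖1 - Complex.exp (2 * π * Complex.I / ((m + 1 : ℕ) : ℂ)) ^ (r + 1)‖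
        = 2 * Real.sin (π * (r + 1) / (m + 1)) := by
    intro r hr
    have hpow : Complex.exp (2 * π * Complex.I / ((m + 1 : ℕ) : ℂ)) ^ (r + 1)
        = Complex.exp (((2 * π * (r + 1) / (m + 1) : ℝ) : ℂ) * Complex.I) := by
      rw [← Complex.exp_nat_mul]
      congr 1
      push_cast
      have hm0 : ((m : ℂ) + 1) ≠ 0 := by
        exact_mod_cast (Nat.cast_ne_zero (R := ℂ)).mpr m.succ_ne_zero
      field_simp
    rw [hpow, abs_one_sub_exp]
    · rw [show (2 * π * ((r:ℝ) + 1) / ((m:ℝ) + 1)) / 2 = π * ((r:ℝ) + 1) / ((m:ℝ) + 1) by ring]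
    · positivity
    · rw [div_div, div_le_iff₀ (by positivity : (0:ℝ) < ((m:ℝ) + 1) * 2)]
      have hr' : (r : ℝ) + 1 ≤ (m : ℝ) + 1 := by
        exact_mod_cast Nat.succ_le_succ (Finset.mem_range.mp hr).le
      nlinarith [Real.pi_pos]
  have h2 : ∏ r ∈ Finset.range m, (2 * Real.sin (π * (r + 1) / (m + 1))) = (m + 1 : ℝ) := by
    calc ∏ r ∈ Finset.range m, (2 * Real.sin (π * (r + 1) / (m + 1)))
        = ∏ r ∈ Finset.range m,
            ‖1 - Complex.exp (2 * π * Complex.I / ((m + 1 : ℕ) : ℂ)) ^ (r + 1)‖ :=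
          (Finset.prod_congr rfl habs).symm
      _ = ‖∏ r ∈ Finset.range m,
            (1 - Complex.exp (2 * π * Complex.I / ((m + 1 : ℕ) : ℂ)) ^ (r + 1))‖ :=
          (Complex.norm_prod _ _).symm
      _ = (m + 1 : ℝ) := by
          rw [hmain, show ((m:ℂ) + 1) = ((m + 1 : ℕ) : ℂ) by push_cast; ring,
            Complex.norm_natCast]
          push_cast; ring
  rw [Finset.prod_mul_distrib, Finset.prod_const, Finset.card_range] at h2
  rw [Finset.prod_Ico_eq_prod_range]
  simp only [Nat.add_sub_cancel]
  have h2pow : (0:ℝ) < 2 ^ m := by positivity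
  rw [eq_div_iff h2pow.ne', mul_comm]
  have hre : ∏ x ∈ Finset.range m, Real.sin (π * ((1 + x : ℕ) : ℝ) / ((m + 1 : ℕ) : ℝ))
      = ∏ x ∈ Finset.range m, Real.sin (π * ((x : ℝ) + 1) / ((m : ℝ) + 1)) :=
    Finset.prod_congr rfl fun x _ => by congr 1; push_cast; ring
  rw [hre, h2]
  push_cast; ring

lemma rhs_eq_one {k : ℕ} (hk : 0 < k) :
    ((2 : ℝ) ^ (k * (k - 1)) / (k : ℝ) ^ k) *
      ∏ r ∈ Finset.Ico 1 k, (Real.sin (π * r / k) ^ 2) ^ (k - r) = 1 := by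
  have hsplit : ∀ r : ℕ, (Real.sin (π * r / k) ^ 2) ^ (k - r)
      = Real.sin (π * r / k) ^ (k - r) * Real.sin (π * r / k) ^ (k - r) := by
    intro r; rw [← pow_add, ← pow_mul]; ring_nf
  rw [Finset.prod_congr rfl fun r _ => hsplit r, Finset.prod_mul_distrib]
  -- reflect the second factor
  have hrefl : ∏ r ∈ Finset.Ico 1 k, Real.sin (π * r / k) ^ (k - r)
      = ∏ r ∈ Finset.Ico 1 k, Real.sin (π * r / k) ^ r := by
    refine Finset.prod_bij' (fun r _ => k - r) (fun r _ => k - r) ?_ ?_ ?_ ?_ ?_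
    · intro r hr; simp only [Finset.mem_Ico] at hr
      show k - r ∈ Finset.Ico 1 k; simp only [Finset.mem_Ico]; omega
    · intro r hr; simp only [Finset.mem_Ico] at hr
      show k - r ∈ Finset.Ico 1 k; simp only [Finset.mem_Ico]; omega
    · intro r hr; simp only [Finset.mem_Ico] at hr; show k - (k - r) = r; omega
    · intro r hr; simp only [Finset.mem_Ico] at hr; show k - (k - r) = r; omega
    · intro r hr
      simp only [Finset.mem_Ico] at hr
      show Real.sin (π * r / k) ^ (k - r) = Real.sin (π * ((k - r : ℕ) : ℝ) / k) ^ (k - r)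
      have h1 : ((k - r : ℕ) : ℝ) = (k : ℝ) - r := by
        rw [Nat.cast_sub hr.2.le]
      rw [h1, show π * ((k : ℝ) - r) / k = π - π * r / k by
        have : (k : ℝ) ≠ 0 := Nat.cast_ne_zero.mpr hk.ne'
        field_simp]
      rw [Real.sin_pi_sub]
  nth_rewrite 2 [hrefl]
  rw [← Finset.prod_mul_distrib]
  have hcomb : ∀ r ∈ Finset.Ico 1 k, Real.sin (π * r / k) ^ (k - r) * Real.sin (π * r / k) ^ r
      = Real.sin (π * r / k) ^ k := by
    intro r hr
    simp only [Finset.mem_Ico] at hr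
    rw [← pow_add]
    congr 1
    omega
  rw [Finset.prod_congr rfl hcomb, Finset.prod_pow, prod_sin_eq hk]
  rw [div_pow, ← pow_mul, show (k - 1) * k = k * (k - 1) by ring]
  have hkR : (0:ℝ) < (k:ℝ) := by positivity
  have h2 : (0:ℝ) < (2:ℝ) ^ (k * (k-1)) := by positivity
  field_simp


lemma eig_one {k : ℕ} (A : Matrix (Fin k) (Fin k) ℂ) (hA : A.IsHermitian) (h1 : A = 1)
    (i : Fin k) : hA.eigenvalues i = 1 := by
  subst h1
  have h := hA.mulVec_eigenvectorBasis i
  rw [Matrix.one_mulVec] at h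
  have hv : ⇑(hA.eigenvectorBasis i) ≠ 0 := by
    intro h0
    exact hA.eigenvectorBasis.orthonormal.ne_zero i ((WithLp.ofLp_eq_zero _).mp h0)
  have hz : ((1 : ℝ) - hA.eigenvalues i) • ⇑(hA.eigenvectorBasis i) = 0 := by
    rw [sub_smul, one_smul, ← h, sub_self]
  rcases smul_eq_zero.mp hz with h1 | h1
  · linarith [sub_eq_zero.mp (by linarith [h1] : (1:ℝ) - hA.eigenvalues i = 0)]
  · exact absurd h1 hv

/-- When `n = Mk` and `G_k` selects every `M`-th row of `G` (rows `1, M+1, …, (k−1)M+1`,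
i.e. 0-based indices `i·M`), one gets
`det(G_k G_kᴴ) = (2^{k(k−1)}/k^k) · ∏_{r=1}^{k−1} (sin²(πr/k))^{k−r} = 1`,
and consequently every eigenvalue of `G_k G_kᴴ` equals `1`. -/
theorem every_Mth_row_tight {n k M α β : ℕ} (hk : 0 < k) (hM : 0 < M) (hn : n = M * k)
    (hkn : k < n) (hab : α + β = k)
    (f : Fin k → Fin n) (hfdef : ∀ i, (f i).val = i.val * M) :
    ((genMatrix n k α).submatrix f id * ((genMatrix n k α).submatrix f id)ᴴ).det =
        ((((2 : ℝ) ^ (k * (k - 1)) / (k : ℝ) ^ k) *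
          ∏ r ∈ Finset.Ico 1 k, (Real.sin (π * r / k) ^ 2) ^ (k - r) : ℝ) : ℂ) ∧
    ((genMatrix n k α).submatrix f id * ((genMatrix n k α).submatrix f id)ᴴ).det = 1 ∧
    ∀ i, (Matrix.isHermitian_mul_conjTranspose_self
        ((genMatrix n k α).submatrix f id)).eigenvalues i = 1 := by
  have hsub : (genMatrix n k α).submatrix f id = 1 :=
    submatrix_eq_one hk hM hn hkn f hfdef
  have hone : (genMatrix n k α).submatrix f id * ((genMatrix n k α).submatrix f id)ᴴ = 1 := by
    rw [hsub]; simp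
  have hdet : ((genMatrix n k α).submatrix f id * ((genMatrix n k α).submatrix f id)ᴴ).det = 1 := by
    rw [hone, Matrix.det_one]
  have hrhs := rhs_eq_one hk
  refine ⟨?_, hdet, ?_⟩
  · rw [hdet, hrhs, Complex.ofReal_one]
  · intro i
    exact eig_one _ _ hone i
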